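/- An element w of Z/nZ is both a square and a cube if and only if it is a sixth power: there exist u, v with w = u^2 = v^3 if and only if there exists z with w = z^6. -/

import Mathlib

/-- If `q` is prime and `q^3 ∣ x^2` then `q^2 ∣ x`. -/
private lemma sq_helper {q x : ℤ} (hq : Prime q) (h : q ^ 3 ∣ x ^ 2) : q ^ 2 ∣ x := by
  have h1 : q ∣ x := hq.dvd_of_dvd_pow (dvd_trans (dvd_pow_self q (by norm_num)) h)
  obtain ⟨y, rfl⟩ := h1
  have h2 : q ^ 2 * q ∣ q ^ 2 * y ^ 2 := by
    rw [← pow_succ]; convert h using 1; ring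
  have h3 : q ∣ y ^ 2 := (mul_dvd_mul_iff_left (pow_ne_zero 2 hq.ne_zero)).mp h2
  have h4 : q ∣ y := hq.dvd_of_dvd_pow h3
  obtain ⟨z, rfl⟩ := h4
  exact ⟨z, by ring⟩

/-- If `q` is prime and `q^6 ∣ x^2` then `q^3 ∣ x`. -/
private lemma six_helper {q x : ℤ} (hq : Prime q) (h : q ^ 6 ∣ x ^ 2) : q ^ 3 ∣ x := by
  have h1 : q ∣ x := hq.dvd_of_dvd_pow (dvd_trans (dvd_pow_self q (by norm_num)) h)
  obtain ⟨y, rfl⟩ := h1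
  have h2 : q ^ 2 * q ^ 4 ∣ q ^ 2 * y ^ 2 := by
    convert h using 1 <;> ring
  have h3 : q ^ 4 ∣ y ^ 2 := (mul_dvd_mul_iff_left (pow_ne_zero 2 hq.ne_zero)).mp h2
  have h4 : q ^ 2 ∣ y := sq_helper hq (dvd_trans (pow_dvd_pow q (by norm_num)) h3)
  obtain ⟨z, rfl⟩ := h4
  exact ⟨z, by ring⟩

/-- If `q` is prime and `q^4 ∣ x^3` then `q^2 ∣ x`. -/
private lemma cube_helper {q x : ℤ} (hq : Prime q) (h : q ^ 4 ∣ x ^ 3) : q ^ 2 ∣ x := by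
  have h1 : q ∣ x := hq.dvd_of_dvd_pow (dvd_trans (dvd_pow_self q (by norm_num)) h)
  obtain ⟨y, rfl⟩ := h1
  have h2 : q ^ 3 * q ∣ q ^ 3 * y ^ 3 := by
    rw [← pow_succ]; convert h using 1; ring
  have h3 : q ∣ y ^ 3 := (mul_dvd_mul_iff_left (pow_ne_zero 3 hq.ne_zero)).mp h2
  have h4 : q ∣ y := hq.dvd_of_dvd_pow h3
  obtain ⟨z, rfl⟩ := h4
  exact ⟨z, by ring⟩

/-- The key prime-power statement over ℤ. -/
private lemma key_int (p : ℕ) (hp : p.Prime) :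
    ∀ k : ℕ, ∀ U V W : ℤ, (p : ℤ) ^ k ∣ W - U ^ 2 → (p : ℤ) ^ k ∣ W - V ^ 3 →
      ∃ Z : ℤ, (p : ℤ) ^ k ∣ W - Z ^ 6 := by
  have hq : Prime (p : ℤ) := Nat.prime_iff_prime_int.mp hp
  set q : ℤ := (p : ℤ) with hqdef
  intro k
  induction k using Nat.strong_induction_on with
  | _ k IH =>
  intro U V W hU hV
  rcases Nat.eq_zero_or_pos k with hk0 | hk1
  · exact ⟨0, by simp [hk0]⟩
  by_cases hW0 : q ^ k ∣ W
  · refine ⟨q ^ k, dvd_sub hW0 ?_⟩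
    exact dvd_pow_self (q ^ k) (by norm_num)
  by_cases hWp : q ∣ W
  · -- non-unit, non-zero case: chain of divisibilities
    have hdvd_of_le : ∀ m : ℕ, m ≤ k → q ^ m ∣ W - U ^ 2 ∧ q ^ m ∣ W - V ^ 3 := fun m hm =>
      ⟨dvd_trans (pow_dvd_pow q hm) hU, dvd_trans (pow_dvd_pow q hm) hV⟩
    have hWof : ∀ m : ℕ, m ≤ k → (q ^ m ∣ U ^ 2 ∨ q ^ m ∣ V ^ 3) → q ^ m ∣ W := by
      intro m hm h
      rcases h with h | h
      · have := dvd_add (hdvd_of_le m hm).1 h; simpa using this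
      · have := dvd_add (hdvd_of_le m hm).2 h; simpa using this
    have hUof : ∀ m : ℕ, m ≤ k → q ^ m ∣ W → q ^ m ∣ U ^ 2 := by
      intro m hm h
      have := dvd_sub h (hdvd_of_le m hm).1; simpa using this
    have hVof : ∀ m : ℕ, m ≤ k → q ^ m ∣ W → q ^ m ∣ V ^ 3 := by
      intro m hm h
      have := dvd_sub h (hdvd_of_le m hm).2; simpa using this
    have hnk : ∀ m : ℕ, q ^ m ∣ W → m < k := by
      intro m h
      by_contra h'
      exact hW0 (dvd_trans (pow_dvd_pow q (by omega)) h)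
    have hk2 : 2 ≤ k := hnk 1 (by simpa using hWp)
    have h1U : q ∣ U := hq.dvd_of_dvd_pow
      (by simpa using hUof 1 hk1 (by simpa using hWp))
    have h1V : q ∣ V := hq.dvd_of_dvd_pow
      (by simpa using hVof 1 hk1 (by simpa using hWp))
    have hW2 : q ^ 2 ∣ W := hWof 2 hk2 (Or.inl (pow_dvd_pow_of_dvd h1U 2))
    have hk3 : 3 ≤ k := hnk 2 hW2
    have hW3 : q ^ 3 ∣ W := hWof 3 hk3 (Or.inr (pow_dvd_pow_of_dvd h1V 3))
    have hk4 : 4 ≤ k := hnk 3 hW3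
    have h2U : q ^ 2 ∣ U := sq_helper hq (hUof 3 hk3 hW3)
    have hU4 : q ^ 4 ∣ U ^ 2 := by
      simpa [← pow_mul] using pow_dvd_pow_of_dvd h2U 2
    have hW4 : q ^ 4 ∣ W := hWof 4 hk4 (Or.inl hU4)
    have hk5 : 5 ≤ k := hnk 4 hW4
    have h2V : q ^ 2 ∣ V := cube_helper hq (hVof 4 hk4 hW4)
    have hV6 : q ^ 6 ∣ V ^ 3 := by
      simpa [← pow_mul] using pow_dvd_pow_of_dvd h2V 3
    have hW5 : q ^ 5 ∣ W := hWof 5 hk5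
      (Or.inr (dvd_trans (pow_dvd_pow q (by norm_num)) hV6))
    have hk6 : 6 ≤ k := hnk 5 hW5
    have hW6 : q ^ 6 ∣ W := hWof 6 hk6 (Or.inr hV6)
    have hk7 : 7 ≤ k := hnk 6 hW6
    have h3U : q ^ 3 ∣ U := six_helper hq (hUof 6 hk6 hW6)
    obtain ⟨W₁, hW1⟩ := hW6
    obtain ⟨U₁, hU1⟩ := h3U
    obtain ⟨V₁, hV1⟩ := h2V
    have hU' : q ^ (k - 6) ∣ W₁ - U₁ ^ 2 := by
      have h2 : q ^ 6 * (W₁ - U₁ ^ 2) = W - U ^ 2 := by rw [hW1, hU1]; ring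
      have h3 : q ^ 6 * q ^ (k - 6) ∣ q ^ 6 * (W₁ - U₁ ^ 2) := by
        rw [h2, ← pow_add, (show 6 + (k - 6) = k by omega)]; exact hU
      exact (mul_dvd_mul_iff_left (pow_ne_zero 6 hq.ne_zero)).mp h3
    have hV' : q ^ (k - 6) ∣ W₁ - V₁ ^ 3 := by
      have h2 : q ^ 6 * (W₁ - V₁ ^ 3) = W - V ^ 3 := by rw [hW1, hV1]; ring
      have h3 : q ^ 6 * q ^ (k - 6) ∣ q ^ 6 * (W₁ - V₁ ^ 3) := by
        rw [h2, ← pow_add, (show 6 + (k - 6) = k by omega)]; exact hV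
      exact (mul_dvd_mul_iff_left (pow_ne_zero 6 hq.ne_zero)).mp h3
    obtain ⟨Z₁, hZ₁⟩ := IH (k - 6) (by omega) U₁ V₁ W₁ hU' hV'
    refine ⟨q * Z₁, ?_⟩
    have h2 : W - (q * Z₁) ^ 6 = q ^ 6 * (W₁ - Z₁ ^ 6) := by rw [hW1]; ring
    rw [h2, (show k = 6 + (k - 6) by omega), pow_add]
    exact mul_dvd_mul_left _ hZ₁
  · -- unit case
    have hqV : ¬ q ∣ V := by
      intro h
      apply hWp
      have h1 : q ∣ V ^ 3 := dvd_pow h (by norm_num)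
      have h2 : q ∣ W - V ^ 3 := dvd_trans (dvd_trans (by simp) (pow_dvd_pow q hk1)) hV
      simpa using dvd_add h2 h1
    have hcop : IsCoprime (q ^ k) V := (hq.coprime_iff_not_dvd.mpr hqV).pow_left
    obtain ⟨x, y, hxy⟩ := hcop
    refine ⟨U * y, ?_⟩
    have hU' : U ^ 2 ≡ W [ZMOD q ^ k] := Int.modEq_iff_dvd.mpr hU
    have hV' : V ^ 3 ≡ W [ZMOD q ^ k] := Int.modEq_iff_dvd.mpr hV
    have hy : V * y ≡ 1 [ZMOD q ^ k] :=
      Int.modEq_iff_dvd.mpr ⟨x, by linear_combination -hxy⟩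
    have h6 : (U * y) ^ 6 ≡ W [ZMOD q ^ k] := by
      calc (U * y) ^ 6 = (U ^ 2) ^ 3 * y ^ 6 := by ring
        _ ≡ W ^ 3 * y ^ 6 [ZMOD q ^ k] := (hU'.pow 3).mul_right _
        _ = W * (W ^ 2 * y ^ 6) := by ring
        _ ≡ W * ((V ^ 3) ^ 2 * y ^ 6) [ZMOD q ^ k] := ((hV'.symm.pow 2).mul_right _).mul_left _
        _ = W * (V * y) ^ 6 := by ring
        _ ≡ W * 1 [ZMOD q ^ k] := (hy.pow 6).mul_left W
        _ = W := mul_one W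
    exact h6.dvd

/-- The prime power case in `ZMod`. -/
private lemma key_zmod (p k : ℕ) (hp : p.Prime) (w : ZMod (p ^ k))
    (h2 : ∃ u : ZMod (p ^ k), w = u ^ 2) (h3 : ∃ v : ZMod (p ^ k), w = v ^ 3) :
    ∃ z : ZMod (p ^ k), w = z ^ 6 := by
  obtain ⟨u, hu⟩ := h2
  obtain ⟨v, hv⟩ := h3
  obtain ⟨U, rfl⟩ := ZMod.intCast_surjective u
  obtain ⟨V, rfl⟩ := ZMod.intCast_surjective v
  obtain ⟨W, rfl⟩ := ZMod.intCast_surjective w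
  have hu' : U ^ 2 ≡ W [ZMOD ((p ^ k : ℕ) : ℤ)] := by
    rw [← ZMod.intCast_eq_intCast_iff]
    push_cast
    exact hu.symm
  have hv' : V ^ 3 ≡ W [ZMOD ((p ^ k : ℕ) : ℤ)] := by
    rw [← ZMod.intCast_eq_intCast_iff]
    push_cast
    exact hv.symm
  have hcast : ((p ^ k : ℕ) : ℤ) = (p : ℤ) ^ k := by push_cast; ring
  obtain ⟨Z, hZ⟩ := key_int p hp k U V W (by rw [← hcast]; exact hu'.dvd) (by rw [← hcast]; exact hv'.dvd)
  refine ⟨(Z : ZMod (p ^ k)), ?_⟩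
  have : Z ^ 6 ≡ W [ZMOD ((p ^ k : ℕ) : ℤ)] := Int.modEq_iff_dvd.mpr (by rw [hcast]; exact hZ)
  rw [← ZMod.intCast_eq_intCast_iff] at this
  push_cast at this
  exact this.symm

private lemma key_all (n : ℕ) :
    n = 0 ∨ ∀ w : ZMod n, (∃ u : ZMod n, w = u ^ 2) → (∃ v : ZMod n, w = v ^ 3) →
      ∃ z : ZMod n, w = z ^ 6 := by
  induction n using Nat.recOnPosPrimePosCoprime with
  | prime_pow p k hp hk =>
    exact Or.inr (key_zmod p k hp)
  | zero => exact Or.inl rfl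
  | one =>
    refine Or.inr fun w _ _ => ⟨0, ?_⟩
    exact Subsingleton.elim _ _
  | coprime a b ha hb hab Pa Pb =>
    rcases Pa with rfl | Pa
    · omega
    rcases Pb with rfl | Pb
    · omega
    refine Or.inr fun w h2 h3 => ?_
    obtain ⟨u, hu⟩ := h2
    obtain ⟨v, hv⟩ := h3
    let e := ZMod.chineseRemainder hab
    obtain ⟨z₁, hz₁⟩ := Pa (e w).1 ⟨(e u).1, by rw [hu, map_pow]; rfl⟩
      ⟨(e v).1, by rw [hv, map_pow]; rfl⟩
    obtain ⟨z₂, hz₂⟩ := Pb (e w).2 ⟨(e u).2, by rw [hu, map_pow]; rfl⟩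
      ⟨(e v).2, by rw [hv, map_pow]; rfl⟩
    refine ⟨e.symm (z₁, z₂), ?_⟩
    have : e w = (z₁, z₂) ^ 6 := by
      ext
      · simpa using hz₁
      · simpa using hz₂
    calc w = e.symm (e w) := (e.symm_apply_apply w).symm
      _ = e.symm ((z₁, z₂) ^ 6) := by rw [this]
      _ = (e.symm (z₁, z₂)) ^ 6 := map_pow e.symm _ 6

theorem square_and_cube_iff_sixthPower (n : ℕ) (hn : 1 ≤ n) (w : ZMod n) :
    (∃ u v : ZMod n, w = u ^ 2 ∧ w = v ^ 3) ↔ ∃ z : ZMod n, w = z ^ 6 := by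
  constructor
  · rintro ⟨u, v, hu, hv⟩
    rcases key_all n with rfl | h
    · omega
    exact h w ⟨u, hu⟩ ⟨v, hv⟩
  · rintro ⟨z, rfl⟩
    exact ⟨z ^ 3, z ^ 2, by ring, by ring⟩
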